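/- For every even n, the number of regular bent generalized Boolean functions from 𝔽₂ⁿ to ℤ₄ equals the square of the number of bent Boolean functions in n variables. -/

import Mathlib

open Finset Matrix

/-- Dot product on 𝔽₂ⁿ. -/
def dotp {n : ℕ} (u x : Fin n → ZMod 2) : ZMod 2 := ∑ j, u j * x j

/-- The character (−1)^{u·x}. -/
def chi {n : ℕ} (u x : Fin n → ZMod 2) : ℤ := (-1) ^ (dotp u x).val

/-- Walsh–Hadamard transform of a quaternary generalized Boolean function. -/
noncomputable def Wq {n : ℕ} (f : (Fin n → ZMod 2) → ZMod 4) (u : Fin n → ZMod 2) : ℂ :=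
  ∑ x : Fin n → ZMod 2, (chi u x : ℂ) * Complex.I ^ (f x).val

/-- A quaternary generalized Boolean function is bent. -/
def IsQBent {n : ℕ} (f : (Fin n → ZMod 2) → ZMod 4) : Prop :=
  ∀ u, ‖Wq f u‖ = Real.sqrt 2 ^ n

/-- A quaternary generalized Boolean function is regular bent. -/
def IsQRegularBent {n : ℕ} (f : (Fin n → ZMod 2) → ZMod 4) : Prop :=
  IsQBent f ∧ ∃ fhat : (Fin n → ZMod 2) → ZMod 4,
    ∀ u, Wq f u = (Real.sqrt 2 : ℂ) ^ n * Complex.I ^ (fhat u).val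

/-- A Boolean function in an even number `n` of variables is bent. -/
def IsBentBF {n : ℕ} (g : (Fin n → ZMod 2) → ZMod 2) : Prop :=
  ∀ u, (∑ x : Fin n → ZMod 2, chi u x * (-1) ^ (g x).val) = 2 ^ (n / 2) ∨
    (∑ x : Fin n → ZMod 2, chi u x * (-1) ^ (g x).val) = -(2 ^ (n / 2))

/- ### Auxiliary definitions and lemmas -/

def a0 (t : ZMod 4) : ZMod 2 := (⟨t.val % 2, Nat.mod_lt _ (by norm_num)⟩ : Fin 2)
def b0 (t : ZMod 4) : ZMod 2 := (⟨t.val / 2, by have := ZMod.val_lt t; omega⟩ : Fin 2)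
def embed2 (s : ZMod 2) : ZMod 4 := (⟨s.val, by have := ZMod.val_lt s; omega⟩ : Fin 4)

lemma zmod4_cases : ∀ t : ZMod 4, t = 0 ∨ t = 1 ∨ t = 2 ∨ t = 3 := by decide

lemma decomp (t : ZMod 4) : (Complex.I ^ t.val) =
    ((1+Complex.I)/2) * (-1:ℂ)^((b0 t).val) + ((1-Complex.I)/2) * (-1:ℂ)^((a0 t + b0 t).val) := by
  rcases zmod4_cases t with h|h|h|h <;> subst h
  · rw [show ZMod.val (0:ZMod 4) = 0 by decide, show (b0 0).val = 0 by decide,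
      show (a0 0 + b0 0).val = 0 by decide]; ring
  · rw [show ZMod.val (1:ZMod 4) = 1 by decide, show (b0 1).val = 0 by decide,
      show (a0 1 + b0 1).val = 1 by decide]; ring
  · rw [show ZMod.val (2:ZMod 4) = 2 by decide, show (b0 2).val = 1 by decide,
      show (a0 2 + b0 2).val = 1 by decide]
    rw [pow_two, Complex.I_mul_I]; ring
  · rw [show ZMod.val (3:ZMod 4) = 3 by decide, show (b0 3).val = 1 by decide,
      show (a0 3 + b0 3).val = 0 by decide]
    rw [pow_succ, pow_two, Complex.I_mul_I]; ring

lemma recon_eq : ∀ t : ZMod 4, embed2 (b0 t + (a0 t + b0 t)) + 2 * embed2 (b0 t) = t := by decide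

lemma proj_eq : ∀ g h : ZMod 2, b0 (embed2 (g+h) + 2*embed2 g) = g ∧
    a0 (embed2 (g+h) + 2*embed2 g) + b0 (embed2 (g+h) + 2*embed2 g) = h := by decide

/-- Walsh transform of a Boolean function (integer-valued). -/
def WB {n : ℕ} (g : (Fin n → ZMod 2) → ZMod 2) (u : Fin n → ZMod 2) : ℤ :=
  ∑ x : Fin n → ZMod 2, chi u x * (-1) ^ (g x).val

lemma Wq_split {n : ℕ} (f : (Fin n → ZMod 2) → ZMod 4) (u : Fin n → ZMod 2) :
    Wq f u = ((1+Complex.I)/2) * (WB (fun x => b0 (f x)) u : ℂ) +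
      ((1-Complex.I)/2) * (WB (fun x => a0 (f x) + b0 (f x)) u : ℂ) := by
  unfold Wq WB
  push_cast
  rw [Finset.mul_sum, Finset.mul_sum, ← Finset.sum_add_distrib]
  refine Finset.sum_congr rfl fun x _ => ?_
  rw [decomp (f x)]; ring

lemma reim (p q r s : ℤ) (h : (p:ℂ) + q*Complex.I = r + s*Complex.I) : p = r ∧ q = s := by
  have h1 := congrArg Complex.re h
  have h2 := congrArg Complex.im h
  simp at h1 h2
  constructor
  · exact_mod_cast h1
  · exact_mod_cast h2

lemma sqrt_two_pow {m : ℕ} : ((Real.sqrt 2 : ℂ)) ^ (m + m) = (2:ℂ) ^ m := by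
  rw [← two_mul, pow_mul]
  norm_num [← Complex.ofReal_pow, Real.sq_sqrt]

/-- Key characterization: regular bent ↔ both Boolean components bent. -/
lemma key {n : ℕ} (hn : Even n) (f : (Fin n → ZMod 2) → ZMod 4) :
    IsQRegularBent f ↔
      IsBentBF (fun x => b0 (f x)) ∧ IsBentBF (fun x => a0 (f x) + b0 (f x)) := by
  obtain ⟨m, hm⟩ := hn
  have hm2 : n / 2 = m := by omega
  have hpos : (0:ℤ) < 2 ^ m := by positivity
  have hs : ((Real.sqrt 2 : ℂ)) ^ n = (2:ℂ) ^ m := by rw [hm]; exact sqrt_two_pow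
  constructor
  · rintro ⟨-, fhat, hfhat⟩
    have main : ∀ u, (WB (fun x => b0 (f x)) u = 2^m ∨ WB (fun x => b0 (f x)) u = -(2^m)) ∧
        (WB (fun x => a0 (f x) + b0 (f x)) u = 2^m ∨
          WB (fun x => a0 (f x) + b0 (f x)) u = -(2^m)) := by
      intro u
      have h := hfhat u
      rw [Wq_split, hs] at h
      set B := WB (fun x => b0 (f x)) u with hB
      set C := WB (fun x => a0 (f x) + b0 (f x)) u with hC
      rcases zmod4_cases (fhat u) with hk|hk|hk|hk <;> rw [hk] at h
      · rw [show ZMod.val (0:ZMod 4) = 0 by decide] at h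
        have h' : ((B + C : ℤ):ℂ) + ((B - C : ℤ):ℂ)*Complex.I =
            ((2*2^m : ℤ):ℂ) + ((0:ℤ):ℂ)*Complex.I := by push_cast; linear_combination 2*h
        obtain ⟨e1, e2⟩ := reim _ _ _ _ h'
        constructor <;> [left; left] <;> omega
      · rw [show ZMod.val (1:ZMod 4) = 1 by decide] at h
        have h' : ((B + C : ℤ):ℂ) + ((B - C : ℤ):ℂ)*Complex.I =
            ((0 : ℤ):ℂ) + ((2*2^m:ℤ):ℂ)*Complex.I := by push_cast; linear_combination 2*h
        obtain ⟨e1, e2⟩ := reim _ _ _ _ h'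
        constructor <;> [left; right] <;> omega
      · rw [show ZMod.val (2:ZMod 4) = 2 by decide, pow_two, Complex.I_mul_I] at h
        have h' : ((B + C : ℤ):ℂ) + ((B - C : ℤ):ℂ)*Complex.I =
            ((-(2*2^m) : ℤ):ℂ) + ((0:ℤ):ℂ)*Complex.I := by push_cast; linear_combination 2*h
        obtain ⟨e1, e2⟩ := reim _ _ _ _ h'
        constructor <;> [right; right] <;> omega
      · rw [show ZMod.val (3:ZMod 4) = 3 by decide, pow_succ, pow_two, Complex.I_mul_I] at h
        have h' : ((B + C : ℤ):ℂ) + ((B - C : ℤ):ℂ)*Complex.I =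
            ((0 : ℤ):ℂ) + ((-(2*2^m):ℤ):ℂ)*Complex.I := by push_cast; linear_combination 2*h
        obtain ⟨e1, e2⟩ := reim _ _ _ _ h'
        constructor <;> [right; left] <;> omega
    constructor <;> intro u <;> rw [hm2]
    · exact (main u).1
    · exact (main u).2
  · rintro ⟨hb, hc⟩
    have hb' : ∀ u, WB (fun x => b0 (f x)) u = 2^m ∨ WB (fun x => b0 (f x)) u = -(2^m) := by
      intro u; have := hb u; rwa [hm2] at this
    have hc' : ∀ u, WB (fun x => a0 (f x) + b0 (f x)) u = 2^m ∨
        WB (fun x => a0 (f x) + b0 (f x)) u = -(2^m) := by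
      intro u; have := hc u; rwa [hm2] at this
    set fhat : (Fin n → ZMod 2) → ZMod 4 := fun u =>
      if WB (fun x => b0 (f x)) u = 2^m then
        (if WB (fun x => a0 (f x) + b0 (f x)) u = 2^m then 0 else 1)
      else (if WB (fun x => a0 (f x) + b0 (f x)) u = 2^m then 3 else 2) with hfhat
    have H : ∀ u, Wq f u = (Real.sqrt 2 : ℂ) ^ n * Complex.I ^ ((fhat u).val) := by
      intro u
      rw [Wq_split, hs, hfhat]
      have hne : (2:ℤ)^m ≠ -(2^m) := by omega
      rcases hb' u with h1|h1 <;> rcases hc' u with h2|h2 <;>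
        simp only [h1, h2, if_pos rfl, if_neg hne, if_neg (fun hh : -(2:ℤ)^m = 2^m => hne hh.symm), if_true, if_false, eq_self_iff_true]
      · rw [show ZMod.val (0:ZMod 4) = 0 by decide]; push_cast; ring
      · rw [show ZMod.val (1:ZMod 4) = 1 by decide]; push_cast; ring
      · rw [show ZMod.val (3:ZMod 4) = 3 by decide, pow_succ, pow_two, Complex.I_mul_I]
        push_cast; ring
      · rw [show ZMod.val (2:ZMod 4) = 2 by decide, pow_two, Complex.I_mul_I]
        push_cast; ring
    refine ⟨fun u => ?_, fhat, H⟩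
    rw [H u]
    simp [Complex.norm_I, Complex.norm_real, abs_of_nonneg (Real.sqrt_nonneg 2)]

/-- The basic bijection between quaternary functions and pairs of Boolean functions. -/
def pairEquiv (n : ℕ) : ((Fin n → ZMod 2) → ZMod 4) ≃
    (((Fin n → ZMod 2) → ZMod 2) × ((Fin n → ZMod 2) → ZMod 2)) where
  toFun f := (fun x => b0 (f x), fun x => a0 (f x) + b0 (f x))
  invFun p := fun x => embed2 (p.1 x + p.2 x) + 2 * embed2 (p.1 x)
  left_inv f := by funext x; exact recon_eq (f x)
  right_inv p := by
    refine Prod.ext ?_ ?_ <;> funext x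
    · exact (proj_eq (p.1 x) (p.2 x)).1
    · exact (proj_eq (p.1 x) (p.2 x)).2

/-- the number of regular bent quaternary functions is the square of
the number of bent Boolean functions. -/
theorem card_quaternary_regular_bent {n : ℕ} (hn : Even n) :
    Nat.card {f : (Fin n → ZMod 2) → ZMod 4 // IsQRegularBent f} =
      (Nat.card {g : (Fin n → ZMod 2) → ZMod 2 // IsBentBF g}) ^ 2 := by
  have e : {f : (Fin n → ZMod 2) → ZMod 4 // IsQRegularBent f} ≃
      {g : (Fin n → ZMod 2) → ZMod 2 // IsBentBF g} ×
      {g : (Fin n → ZMod 2) → ZMod 2 // IsBentBF g} :=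
    (Equiv.subtypeEquiv (pairEquiv n) (fun f => key hn f)).trans
      (Equiv.subtypeProdEquivProd)
  rw [Nat.card_congr e, Nat.card_prod, sq]
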